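/- Let (a_k)_{k∈ℤ}, (b_k)_{k∈ℤ} be nonnegative sequences with ∑_k a_k < ∞, and suppose a_{k+1} ≤ 2^q b_k^{2θ} a_k^{2(1−θ)/s} for all k, where 0 < s < 2, q = 2n/(n−2), n ≥ 3, and 1/2 = θ/q + (1−θ)/s (so 0 < θ < 1). Then ∑_{k∈ℤ} a_k ≤ 2^{q(q−s)/(2−s)} ( ∑_{k∈ℤ} b_k² )^{q/2}. -/

import Mathlib

open ENNReal MeasureTheory

/-- For `p ≥ 1`, `∑ c^p ≤ (∑ c)^p` in `ℝ≥0∞`. -/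
private lemma tsum_rpow_le_rpow_tsum_aux (c : ℤ → ℝ≥0∞) (p : ℝ) (hp : 1 ≤ p) :
    (∑' k, c k ^ p) ≤ (∑' k, c k) ^ p := by
  by_cases h0 : (∑' k, c k) = 0
  · have : ∀ k, c k = 0 := fun k =>
      le_antisymm (h0 ▸ ENNReal.le_tsum k) zero_le
    simp [this, ENNReal.zero_rpow_of_pos (by linarith : (0:ℝ) < p), h0]
  by_cases htop : (∑' k, c k) = ⊤
  · rw [htop, ENNReal.top_rpow_of_pos (by linarith)]
    exact le_top
  · calc (∑' k, c k ^ p) ≤ ∑' k, c k * (∑' j, c j) ^ (p - 1) := by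
          refine ENNReal.tsum_le_tsum fun k => ?_
          calc c k ^ p = c k ^ (1 + (p-1)) := by ring_nf
            _ = c k ^ (1:ℝ) * c k ^ (p-1) := by
                rcases eq_or_ne (c k) 0 with h | h
                · simp [h, ENNReal.zero_rpow_of_pos (by linarith : (0:ℝ) < p)]
                · rw [ENNReal.rpow_add _ _ h
                    (lt_of_le_of_lt (ENNReal.le_tsum k) (lt_top_iff_ne_top.2 htop)).ne]
            _ ≤ c k * (∑' j, c j) ^ (p-1) := by
                rw [ENNReal.rpow_one]
                exact mul_le_mul_right (ENNReal.rpow_le_rpow (ENNReal.le_tsum k) (by linarith)) _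
        _ = (∑' k, c k) * (∑' j, c j) ^ (p - 1) := ENNReal.tsum_mul_right
        _ = (∑' k, c k) ^ p := by
            nth_rewrite 1 [← ENNReal.rpow_one (∑' k, c k)]
            rw [← ENNReal.rpow_add _ _ h0 htop]
            ring_nf



/-- Summation/Hölder lemma closing the dyadic iteration: if the nonnegative sequences
`(a_k)`, `(b_k)` satisfy `a_{k+1} ≤ 2^q b_k^{2θ} a_k^{2(1−θ)/s}` with `0 < s < 2`,
`q = 2n/(n−2)`, `n ≥ 3`, `1/2 = θ/q + (1−θ)/s`, `0 < θ < 1`, and `∑ a_k < ∞`, then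
`∑_{k∈ℤ} a_k ≤ 2^{q(q−s)/(2−s)} (∑_{k∈ℤ} b_k²)^{q/2}`. -/
theorem dyadic_sum_closing (n : ℕ) (hn : 3 ≤ n) (q s θ : ℝ)
    (hq : q = 2 * n / (n - 2)) (hs0 : 0 < s) (hs2 : s < 2)
    (hθ0 : 0 < θ) (hθ1 : θ < 1) (hθ : 1 / 2 = θ / q + (1 - θ) / s)
    (a b : ℤ → ℝ) (ha : ∀ k, 0 ≤ a k) (hb : ∀ k, 0 ≤ b k)
    (hsum : Summable a)
    (hrec : ∀ k, a (k + 1) ≤ 2 ^ q * b k ^ (2 * θ) * a k ^ (2 * (1 - θ) / s)) :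
    (∑' k : ℤ, ENNReal.ofReal (a k))
      ≤ ENNReal.ofReal ((2 : ℝ) ^ (q * (q - s) / (2 - s))) *
          (∑' k : ℤ, ENNReal.ofReal (b k ^ 2)) ^ (q / 2) := by
  have hn2 : (2:ℝ) < (n:ℝ) := by exact_mod_cast (by omega : 2 < n)
  have hq2 : 2 < q := by
    rw [hq, lt_div_iff₀ (by linarith)]; linarith
  have hq0 : 0 < q := by linarith
  have h1θ : 0 < 1 - θ := by linarith
  -- key identity from hθ
  have hkey : 2 * θ * (q - s) = q * (2 - s) := by
    field_simp at hθ
    nlinarith [hθ]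
  set r : ℝ := 2 * (1 - θ) / s with hr
  have hr0 : 0 < r := by rw [hr]; positivity
  have hrq : r = 1 - 2 * θ / q := by
    rw [hr]
    field_simp at hθ ⊢
    nlinarith [hθ]
  have hr1 : r < 1 := by
    rw [hrq]
    have : 0 < 2 * θ / q := by positivity
    linarith
  set A : ℝ≥0∞ := ∑' k : ℤ, ENNReal.ofReal (a k) with hA
  set B : ℝ≥0∞ := ∑' k : ℤ, ENNReal.ofReal (b k ^ 2) with hB
  -- A is finite
  have hAtop : A ≠ ⊤ := by
    rw [hA, ← ENNReal.ofReal_tsum_of_nonneg ha hsum]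
    exact ENNReal.ofReal_ne_top
  set C : ℝ≥0∞ := ENNReal.ofReal ((2:ℝ) ^ q) with hC
  -- main estimate: A ≤ C * B^θ * A^r
  have hmain : A ≤ C * B ^ θ * A ^ r := by
    have hterm : ∀ k : ℤ, ENNReal.ofReal (a (k + 1)) ≤
        C * ((ENNReal.ofReal (b k)) ^ (2*θ) * (ENNReal.ofReal (a k)) ^ r) := by
      intro k
      refine le_trans (ENNReal.ofReal_le_ofReal (hrec k)) ?_
      rw [ENNReal.ofReal_mul (mul_nonneg (by positivity) (Real.rpow_nonneg (hb k) _)),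
        ENNReal.ofReal_mul (by positivity),
        ← ENNReal.ofReal_rpow_of_nonneg (hb k) (by positivity),
        ← ENNReal.ofReal_rpow_of_nonneg (ha k) (le_of_lt hr0)]
      rw [mul_assoc]
    calc A = ∑' k : ℤ, ENNReal.ofReal (a (k + 1)) :=
          ((Equiv.addRight (1:ℤ)).tsum_eq fun k => ENNReal.ofReal (a k)).symm
      _ ≤ ∑' k : ℤ, C * ((ENNReal.ofReal (b k)) ^ (2*θ) * (ENNReal.ofReal (a k)) ^ r) :=
          ENNReal.tsum_le_tsum hterm
      _ = C * ∑' k : ℤ, ((ENNReal.ofReal (b k)) ^ (2*θ) * (ENNReal.ofReal (a k)) ^ r) :=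
          ENNReal.tsum_mul_left
      _ ≤ C * (B ^ θ * A ^ r) := by
          gcongr
          -- Hölder with exponents 1/θ and 1/(1-θ)
          have hpq : Real.HolderConjugate (1/θ) (1/(1-θ)) := by
            rw [Real.holderConjugate_iff]
            constructor
            · rw [lt_div_iff₀ hθ0]; linarith
            · simp only [one_div, inv_inv]; ring
          have hholder := ENNReal.lintegral_mul_le_Lp_mul_Lq (Measure.count : Measure ℤ) hpq
            (f := fun k => (ENNReal.ofReal (b k)) ^ (2*θ))
            (g := fun k => (ENNReal.ofReal (a k)) ^ r)
            (measurable_of_countable _).aemeasurable (measurable_of_countable _).aemeasurable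
          simp only [Pi.mul_apply, lintegral_count] at hholder
          refine le_trans hholder ?_
          have e1 : ∀ k : ℤ, ((ENNReal.ofReal (b k)) ^ (2*θ)) ^ (1/θ) = ENNReal.ofReal (b k ^ 2) := by
            intro k
            rw [← ENNReal.rpow_mul]
            have h2 : 2 * θ * (1/θ) = 2 := by field_simp
            rw [h2, ENNReal.ofReal_rpow_of_nonneg (hb k) (by norm_num : (0:ℝ) ≤ 2)]
            norm_num
          have e2 : ∀ k : ℤ, ((ENNReal.ofReal (a k)) ^ r) ^ (1/(1-θ)) =
              (ENNReal.ofReal (a k)) ^ (2/s) := by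
            intro k
            rw [← ENNReal.rpow_mul]
            congr 1
            rw [hr]
            field_simp
          simp only [e1, e2]
          rw [one_div_one_div, one_div_one_div]
          refine mul_le_mul' le_rfl ?_
          -- (∑ a^(2/s))^(1-θ) ≤ A^r
          have h2s : (1:ℝ) ≤ 2/s := by
            rw [le_div_iff₀ hs0]; linarith
          calc (∑' k : ℤ, (ENNReal.ofReal (a k)) ^ (2/s)) ^ (1-θ)
              ≤ (A ^ (2/s)) ^ (1-θ) :=
                ENNReal.rpow_le_rpow (tsum_rpow_le_rpow_tsum_aux _ _ h2s) (by linarith)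
            _ = A ^ r := by
                rw [← ENNReal.rpow_mul, hr]
                congr 1
                field_simp
      _ = C * B ^ θ * A ^ r := by rw [mul_assoc]
  -- handle B = ⊤
  by_cases hBtop : B = ⊤
  · rw [hBtop, ENNReal.top_rpow_of_pos (by positivity)]
    rw [ENNReal.mul_top (by positivity)]
    exact le_top
  -- handle A = 0
  by_cases hA0 : A = 0
  · rw [hA0]; exact zero_le
  -- now divide
  have hAr_ne0 : A ^ r ≠ 0 := (ENNReal.rpow_pos (pos_iff_ne_zero.2 hA0) hAtop).ne'
  have hAr_netop : A ^ r ≠ ⊤ := ENNReal.rpow_ne_top_of_nonneg (le_of_lt hr0) hAtop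
  have hdiv : A ^ (1 - r) ≤ C * B ^ θ := by
    rw [← ENNReal.mul_le_mul_iff_left hAr_ne0 hAr_netop]
    calc A ^ (1-r) * A ^ r = A := by
          rw [← ENNReal.rpow_add _ _ hA0 hAtop]; norm_num
      _ ≤ C * B ^ θ * A ^ r := hmain
  -- raise to power m = q/(2θ)
  have hm0 : 0 < q / (2*θ) := by positivity
  have hfin := ENNReal.rpow_le_rpow hdiv (le_of_lt hm0)
  rw [← ENNReal.rpow_mul] at hfin
  have h1r : (1 - r) * (q / (2*θ)) = 1 := by
    rw [hrq]
    field_simp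
    ring
  rw [h1r, ENNReal.rpow_one] at hfin
  refine le_trans hfin ?_
  rw [ENNReal.mul_rpow_of_nonneg _ _ (le_of_lt hm0), ← ENNReal.rpow_mul]
  have hθm : θ * (q / (2*θ)) = q / 2 := by field_simp
  rw [hθm]
  gcongr
  rw [hC, ENNReal.ofReal_rpow_of_nonneg (by positivity) (le_of_lt hm0),
    ← Real.rpow_mul (by norm_num)]
  refine le_of_eq ?_
  congr 1
  have hq2s : q * (q - s) / (2 - s) = q * q / (2 * θ) := by
    rw [div_eq_div_iff (by linarith) (by positivity)]
    nlinarith [hkey]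
  rw [hq2s]
  field_simp
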